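/- For any DAG G, both the node of rank 1 and the node of rank 2 (with respect to the progeny order) belong to the 2-influential set of G. -/

import Mathlib

attribute [local instance] Classical.propDecidable

/-- The progeny of node `i`: all nodes with a directed path to `i`, including `i`. -/
noncomputable def progeny {n : ℕ} (E : Finset (Fin n × Fin n)) (i : Fin n) : Finset (Fin n) :=
  Finset.univ.filter (fun j => Relation.ReflTransGen (fun u v => (u, v) ∈ E) j i)

/-- The graph is acyclic. -/
def Acyclic {n : ℕ} (E : Finset (Fin n × Fin n)) : Prop :=
  ∀ i : Fin n, ¬ Relation.TransGen (fun u v => (u, v) ∈ E) i i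

/-- `Prec E i j` means `i ≻ j` : larger progeny, ties broken by larger index. -/
def Prec {n : ℕ} (E : Finset (Fin n × Fin n)) (i j : Fin n) : Prop :=
  (progeny E j).card < (progeny E i).card ∨
    ((progeny E j).card = (progeny E i).card ∧ j < i)

/-- Delete all out-edges of node `i`. -/
noncomputable def delOut {n : ℕ} (E : Finset (Fin n × Fin n)) (i : Fin n) :
    Finset (Fin n × Fin n) := E.filter (fun e => e.1 ≠ i)

/-- `i` is in the `k`-influential set: fewer than `k` nodes outrank `i`
after `i` deletes all her out-edges. -/
noncomputable def Influential {n : ℕ} (k : ℕ) (E : Finset (Fin n × Fin n)) (i : Fin n) : Prop :=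
  (Finset.univ.filter (fun j => Prec (delOut E i) j i)).card < k


lemma progeny_delOut_subset {n : ℕ} (E : Finset (Fin n × Fin n)) (i j : Fin n) :
    progeny (delOut E i) j ⊆ progeny E j := by
  intro x hx
  simp only [progeny, Finset.mem_filter, Finset.mem_univ, true_and] at *
  exact Relation.ReflTransGen.mono (fun u v h => (Finset.mem_filter.mp h).1) _ _ hx

lemma progeny_delOut_self {n : ℕ} (E : Finset (Fin n × Fin n)) (hE : Acyclic E) (i : Fin n) :
    progeny (delOut E i) i = progeny E i := by
  apply Finset.Subset.antisymm (progeny_delOut_subset E i i)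
  intro x hx
  simp only [progeny, Finset.mem_filter, Finset.mem_univ, true_and] at *
  induction hx using Relation.ReflTransGen.head_induction_on with
  | refl => exact .refl
  | head h h' ih =>
    refine Relation.ReflTransGen.head ?_ ih
    simp only [delOut, Finset.mem_filter]
    refine ⟨h, ?_⟩
    intro hbi
    rw [hbi] at h
    exact hE i (Relation.TransGen.head' h h')

lemma key {n : ℕ} (E : Finset (Fin n × Fin n)) (hE : Acyclic E) (i j : Fin n)
    (hj : j ≠ i) (hij : Prec E i j) : ¬ Prec (delOut E i) j i := by
  intro h
  have h1 : (progeny (delOut E i) j).card ≤ (progeny E j).card :=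
    Finset.card_le_card (progeny_delOut_subset E i j)
  simp only [Prec, progeny_delOut_self E hE i] at h
  rcases h with h | ⟨heq, hlt⟩
  · rcases hij with h2 | ⟨h2, _⟩ <;> omega
  · rcases hij with h2 | ⟨h2, h3⟩
    · omega
    · exact lt_asymm h3 hlt

/-- the rank-1 and rank-2 nodes both belong to the 2-influential set. -/
theorem stmt9 {n : ℕ} (hn : 2 ≤ n) (E : Finset (Fin n × Fin n)) (hE : Acyclic E)
    (i1 i2 : Fin n) (h12 : i1 ≠ i2)
    (hi1 : ∀ j : Fin n, j ≠ i1 → Prec E i1 j)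
    (hi2 : ∀ j : Fin n, j ≠ i1 → j ≠ i2 → Prec E i2 j) :
    Influential 2 E i1 ∧ Influential 2 E i2 := by
  constructor
  · unfold Influential
    have he : Finset.univ.filter (fun j => Prec (delOut E i1) j i1) = ∅ := by
      rw [Finset.filter_eq_empty_iff]
      intro j _
      by_cases hj : j = i1
      · subst hj
        rintro (h | ⟨_, h⟩) <;> exact lt_irrefl _ h
      · exact key E hE i1 j hj (hi1 j hj)
    rw [he]
    simp
  · unfold Influential
    have hsub : Finset.univ.filter (fun j => Prec (delOut E i2) j i2) ⊆ {i1} := by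
      intro j hj
      simp only [Finset.mem_filter, Finset.mem_univ, true_and] at hj
      simp only [Finset.mem_singleton]
      by_contra hj1
      by_cases hj2 : j = i2
      · subst hj2
        rcases hj with h | ⟨_, h⟩ <;> exact lt_irrefl _ h
      · exact key E hE i2 j hj2 (hi2 j hj1 hj2) hj
    have hc := Finset.card_le_card hsub
    simp at hc
    omega
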